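/- Let K be a differential operator (a pseudo-differential operator with only nonnegative powers of ∂) and f, g functions. Then the strictly negative part of the commutator satisfies [K, f ∂^{−1} ∘ g]_− = K(f) ∂^{−1} ∘ g − f ∂^{−1} ∘ K*(g), where K(f) denotes the action of K on f and K* the formal adjoint. -/

import Mathlib

/-! STATEMENT 8: For a differential operator `K` (order `≤ bK`, no negative powers of `∂`)
and functions `f, g`, the strictly negative part of the commutator satisfies
`[K, f ∂⁻¹ ∘ g]₋ = K(f) ∂⁻¹ ∘ g − f ∂⁻¹ ∘ K*(g)`.

Pseudo-differential operators are represented by coefficient functions `ℤ → A`;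
`mopCoeff f g` is the coefficient function of `f ∂⁻¹ ∘ g`
(`∂⁻¹ ∘ g = Σ_{l≥0} (−1)^l g^{(l)} ∂^{−1−l}`), `compCoeff` composition,
`adjCoeff` the formal adjoint, and `actC` the action of (the differential part of)
an operator on a function.  The conclusion is stated coefficientwise for all `k < 0`. -/

open Finset

noncomputable section

def gbinom (i : ℤ) (l : ℕ) : ℚ :=
  (∏ t ∈ Finset.range l, ((i : ℚ) - t)) / (Nat.factorial l)

variable {A : Type*} [CommRing A] [Algebra ℚ A]

def compCoeff (d : A → A) (p : ℤ → A) (bp : ℤ) (q : ℤ → A) (bq : ℤ) (k : ℤ) : A :=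
  ∑ i ∈ Finset.Icc (k - bq) bp,
    ∑ l ∈ Finset.range ((i + bq - k).toNat + 1),
      gbinom i l • (p i * d^[l] (q (k - i + l)))

def adjCoeff (d : A → A) (q : ℤ → A) (bq : ℤ) (k : ℤ) : A :=
  ∑ i ∈ Finset.Icc k bq,
    (((-1 : ℚ) ^ i) * gbinom i (i - k).toNat) • d^[(i - k).toNat] (q i)

/-- Coefficient function of the operator `f ∂⁻¹ ∘ g`. -/
def mopCoeff (d : A → A) (f g : A) (k : ℤ) : A :=
  if k < 0 then ((-1 : ℚ) ^ (-1 - k)) • (f * d^[(-1 - k).toNat] g) else 0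

/-- Action of (the differential part of) an operator with coefficients `p`,
of order `≤ b`, on a function `f`: `Σ_{0 ≤ i ≤ b} p_i f^{(i)}`. -/
def actC (d : A → A) (p : ℤ → A) (b : ℕ) (f : A) : A :=
  ∑ i ∈ Finset.range (b + 1), p (i : ℤ) * d^[i] f

lemma iter_eq (d : Derivation ℚ A A) (n : ℕ) :
    (fun x => d x)^[n] = ⇑(((d : A →ₗ[ℚ] A)) ^ n) := by
  ext x; rw [show (fun x => d x) = ⇑((d : A →ₗ[ℚ] A)) from rfl, ← Module.End.pow_apply]

lemma iter_smul (d : Derivation ℚ A A) (n : ℕ) (c : ℚ) (x : A) :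
    (fun x => d x)^[n] (c • x) = c • (fun x => d x)^[n] x := by
  simp [iter_eq]

lemma iter_zero (d : Derivation ℚ A A) (n : ℕ) :
    (fun x => d x)^[n] (0 : A) = 0 := by simp [iter_eq]

lemma negpow_sub (a b : ℕ) (h : b ≤ a) : ((-1:ℚ))^(a-b) = (-1)^a * (-1)^b := by
  have h1 : ((-1:ℚ))^(a-b) * ((-1:ℚ))^b = (-1)^a := by
    rw [← pow_add, Nat.sub_add_cancel h]
  have h2 : ((-1:ℚ))^b * ((-1:ℚ))^b = 1 := by
    rw [← pow_add]
    exact Even.neg_one_pow ⟨b, rfl⟩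
  calc ((-1:ℚ))^(a-b) = ((-1:ℚ))^(a-b) * (((-1:ℚ))^b * ((-1:ℚ))^b) := by rw [h2, mul_one]
    _ = (-1)^a * (-1)^b := by rw [← mul_assoc, h1]

lemma negpow_cancel (i N : ℕ) : ((-1:ℚ))^(i+N) * (-1)^i = (-1)^N := by
  have h2 : ((-1:ℚ))^i * ((-1:ℚ))^i = 1 := by
    rw [← pow_add]; exact Even.neg_one_pow ⟨i, rfl⟩
  calc ((-1:ℚ))^(i+N) * (-1)^i = ((-1:ℚ))^i * ((-1:ℚ))^i * (-1)^N := by rw [pow_add]; ring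
    _ = (-1)^N := by rw [h2, one_mul]


lemma sum_Icc_nat (b : ℕ) (F : ℤ → A) :
    ∑ i ∈ Finset.Icc (0:ℤ) (b:ℤ), F i = ∑ i ∈ range (b+1), F (i:ℤ) := by
  refine Finset.sum_nbij' (i := fun i : ℤ => i.toNat) (j := fun n : ℕ => (n : ℤ))
    ?_ ?_ ?_ ?_ ?_
  · intro a ha; simp only [mem_Icc] at ha; simp only [mem_range]; omega
  · intro a ha; simp only [mem_range] at ha; simp only [mem_Icc]; omega
  · intro a ha; simp only [mem_Icc] at ha; omega
  · intro a ha; simp only [mem_range] at ha; omega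
  · intro a ha; simp only [mem_Icc] at ha; congr 1; omega

lemma sum_Icc_neg (c : ℕ) (F : ℤ → A) :
    ∑ i ∈ Finset.Icc (-1 - (c:ℤ)) (-1:ℤ), F i = ∑ j ∈ range (c+1), F (-1 - (j:ℤ)) := by
  refine Finset.sum_nbij' (i := fun i : ℤ => (-1 - i).toNat) (j := fun n : ℕ => -1 - (n : ℤ))
    ?_ ?_ ?_ ?_ ?_
  · intro a ha; simp only [mem_Icc] at ha; simp only [mem_range]; omega
  · intro a ha; simp only [mem_range] at ha; simp only [mem_Icc]; omega
  · intro a ha; simp only [mem_Icc] at ha; omega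
  · intro a ha; simp only [mem_range] at ha; omega
  · intro a ha; simp only [mem_Icc] at ha; congr 1; omega

lemma sum_Icc_shift (c b : ℕ) (hib : c ≤ b) (F : ℤ → A) :
    ∑ m ∈ Finset.Icc ((c:ℤ)) (b:ℤ), F m = ∑ t ∈ range (b - c + 1), F ((c:ℤ) + t) := by
  refine Finset.sum_nbij' (i := fun m : ℤ => (m - c).toNat) (j := fun t : ℕ => (c:ℤ) + t)
    ?_ ?_ ?_ ?_ ?_
  · intro a ha; simp only [mem_Icc] at ha; simp only [mem_range]; omega
  · intro a ha; simp only [mem_range] at ha; simp only [mem_Icc]; omega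
  · intro a ha; simp only [mem_Icc] at ha; omega
  · intro a ha; simp only [mem_range] at ha; omega
  · intro a ha; simp only [mem_Icc] at ha; congr 1; omega

lemma gbinom_zero (i : ℤ) : gbinom i 0 = 1 := by simp [gbinom]

lemma gbinom_succ (i : ℤ) (l : ℕ) :
    gbinom i (l+1) = gbinom i l * ((i:ℚ) - l) / (l+1) := by
  unfold gbinom
  rw [prod_range_succ, Nat.factorial_succ]
  have h1 : ((l.factorial : ℚ)) ≠ 0 := by positivity
  have h2 : ((l:ℚ) + 1) ≠ 0 := by positivity
  push_cast
  rw [div_mul_eq_mul_div, div_div, mul_comm ((l:ℚ)+1) _]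

lemma gbinom_natCast (i : ℕ) : ∀ l : ℕ, gbinom (i : ℤ) l = (i.choose l : ℚ) := by
  intro l
  induction l with
  | zero => simp [gbinom_zero]
  | succ l ih =>
    rw [gbinom_succ, ih]
    have h2 : ((l:ℚ) + 1) ≠ 0 := by positivity
    push_cast
    rcases le_or_gt (l+1) i with h | h
    · have h0 := Nat.choose_succ_right_eq i l
      have hc : ((i.choose (l+1) * (l+1) : ℕ) : ℚ) = ((i.choose l * (i - l) : ℕ) : ℚ) := by
        rw [h0]
      push_cast [Nat.cast_sub (show l ≤ i by omega)] at hc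
      rw [← hc, mul_comm ((i.choose (l+1) : ℚ)) _, mul_div_assoc]
      field_simp
    · rcases Nat.lt_or_ge i l with h' | h'
      · rw [Nat.choose_eq_zero_of_lt h', Nat.choose_eq_zero_of_lt (by omega)]
        simp
      · have hl : i = l := by omega
        subst hl
        rw [Nat.choose_self, Nat.choose_succ_self]
        push_cast
        ring

lemma gbinom_neg (j : ℕ) : ∀ l : ℕ, gbinom (-1 - (j:ℤ)) l = (-1:ℚ)^l * ((j+l).choose l : ℚ) := by
  intro l
  induction l with
  | zero => simp [gbinom_zero]
  | succ l ih =>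
    rw [gbinom_succ, ih]
    have h2 : ((l:ℚ) + 1) ≠ 0 := by positivity
    have h0 := Nat.add_one_mul_choose_eq (j+l) l
    have hc := congrArg (fun n : ℕ => (n : ℚ)) h0
    push_cast at hc
    have e : (j:ℕ) + (l+1) = (j+l)+1 := by omega
    rw [e]
    push_cast
    field_simp
    linear_combination ((-1:ℚ))^(l+1) * hc

lemma dmul (d : Derivation ℚ A A) (a b : A) : d (a * b) = d a * b + a * d b := by
  rw [Derivation.leibniz, smul_eq_mul, smul_eq_mul]; ring

/-- Iterated Leibniz rule. -/
lemma iter_mul (d : Derivation ℚ A A) : ∀ (n : ℕ) (a b : A),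
    (fun x => d x)^[n] (a * b)
      = ∑ s ∈ range (n+1), (n.choose s : ℚ) • ((fun x => d x)^[s] a * (fun x => d x)^[n-s] b) := by
  intro n
  induction n with
  | zero => intro a b; simp
  | succ n ih =>
    intro a b
    set T : ℕ → A := fun s => (fun x => d x)^[s] a * (fun x => d x)^[n+1-s] b with hT
    have h1 : (fun x => d x)^[n+1] (a*b) = d ((fun x => d x)^[n] (a*b)) :=
      Function.iterate_succ_apply' _ n (a*b)
    have h2 : ∀ s ∈ range (n+1),
        d ((n.choose s : ℚ) • ((fun x => d x)^[s] a * (fun x => d x)^[n-s] b))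
        = (n.choose s : ℚ) • T (s+1) + (n.choose s : ℚ) • T s := by
      intro s hs
      simp only [mem_range] at hs
      have e1 : n + 1 - (s+1) = n - s := by omega
      have e2 : n - s + 1 = n + 1 - s := by omega
      rw [Derivation.map_smul, dmul, smul_add, ← Function.iterate_succ_apply' (fun x => d x) s a,
        ← Function.iterate_succ_apply' (fun x => d x) (n-s) b, hT]
      simp only [hT, Nat.succ_eq_add_one, e1, e2]
    rw [h1, ih, map_sum, sum_congr rfl h2, sum_add_distrib]
    have key : ∀ s : ℕ, (((n+1).choose (s+1) : ℚ)) = (n.choose s : ℚ) + (n.choose (s+1) : ℚ) := by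
      intro s; rw [Nat.choose_succ_succ]; push_cast; ring
    have hrhs : ∑ s ∈ range (n+2), ((n+1).choose s : ℚ) • T s
        = (∑ s ∈ range (n+1), (n.choose s : ℚ) • T (s+1)
          + ∑ s ∈ range (n+1), (n.choose (s+1) : ℚ) • T (s+1)) + T 0 := by
      rw [Finset.sum_range_succ' (fun s => ((n+1).choose s : ℚ) • T s) (n+1), ← sum_add_distrib]
      simp only [key, add_smul]
      simp
    have hlhs2 : ∑ s ∈ range (n+1), (n.choose s : ℚ) • T s
        = ∑ s ∈ range (n+1), (n.choose (s+1) : ℚ) • T (s+1) + T 0 := by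
      rw [Finset.sum_range_succ' (fun s => (n.choose s : ℚ) • T s) n,
        Finset.sum_range_succ (fun s => (n.choose (s+1) : ℚ) • T (s+1)) n]
      simp [Nat.choose_succ_self]
    rw [hrhs, hlhs2]
    abel

lemma keyL (d : Derivation ℚ A A) (g : A) (N : ℕ) : ∀ (i : ℕ) (f : A),
    ∑ l ∈ range (i+1), ((-1:ℚ)^l * (i.choose l : ℚ)) •
        (fun x => d x)^[l] (f * (fun x => d x)^[i+N-l] g)
      = (-1:ℚ)^i • ((fun x => d x)^[i] f * (fun x => d x)^[N] g) := by
  intro i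
  induction i with
  | zero => intro f; simp
  | succ i ih =>
    intro f
    have split : ∀ l m, (fun x => d x)^[l] (d f * (fun x => d x)^[m] g)
        = (fun x => d x)^[l+1] (f * (fun x => d x)^[m] g)
          - (fun x => d x)^[l] (f * (fun x => d x)^[m+1] g) := by
      intro l m
      have h0 : d f * (fun x => d x)^[m] g
          = d (f * (fun x => d x)^[m] g) - f * (fun x => d x)^[m+1] g := by
        rw [dmul, Function.iterate_succ_apply' (fun x => d x) m g]
        ring
      rw [h0, iter_eq, map_sub, ← iter_eq]
      congr 1
    have ihdf := ih (d f)
    have hstep : ∀ l ∈ range (i+1),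
        ((-1:ℚ)^l * (i.choose l : ℚ)) • (fun x => d x)^[l] (d f * (fun x => d x)^[i+N-l] g)
        = ((-1:ℚ)^l * (i.choose l : ℚ)) • (fun x => d x)^[l+1] (f * (fun x => d x)^[i+N-l] g)
          - ((-1:ℚ)^l * (i.choose l : ℚ)) • (fun x => d x)^[l] (f * (fun x => d x)^[i+N-l+1] g) := by
      intro l _
      rw [split, smul_sub]
    rw [sum_congr rfl hstep, sum_sub_distrib,
      ← Function.iterate_succ_apply (fun x => d x) i f] at ihdf
    set S1 := ∑ l ∈ range (i+1), ((-1:ℚ)^l * (i.choose l : ℚ)) •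
        (fun x => d x)^[l+1] (f * (fun x => d x)^[i+N-l] g) with hS1def
    set S2 := ∑ l ∈ range (i+1), ((-1:ℚ)^l * (i.choose l : ℚ)) •
        (fun x => d x)^[l] (f * (fun x => d x)^[i+N-l+1] g) with hS2def
    set S2' := ∑ l ∈ range (i+1), (-((-1:ℚ)^l * (i.choose (l+1) : ℚ))) •
        (fun x => d x)^[l+1] (f * (fun x => d x)^[i+N-l] g) with hS2'def
    set P0 := f * (fun x => d x)^[i+1+N] g with hP0def
    have pascal : ∀ l : ℕ, (((i+1).choose (l+1) : ℚ)) = (i.choose l : ℚ) + (i.choose (l+1) : ℚ) := by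
      intro l; rw [Nat.choose_succ_succ]; push_cast; ring
    have hL : ∑ l ∈ range (i+1+1), ((-1:ℚ)^l * ((i+1).choose l : ℚ)) •
          (fun x => d x)^[l] (f * (fun x => d x)^[i+1+N-l] g)
        = (-S1 + S2') + P0 := by
      rw [Finset.sum_range_succ' (fun l => ((-1:ℚ)^l * ((i+1).choose l : ℚ)) •
          (fun x => d x)^[l] (f * (fun x => d x)^[i+1+N-l] g)) (i+1)]
      congr 1
      · rw [hS1def, hS2'def, ← sum_neg_distrib, ← sum_add_distrib]
        apply sum_congr rfl; intro l hl
        simp only [mem_range] at hl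
        have e : i+1+N-(l+1) = i+N-l := by omega
        rw [e, ← neg_smul, ← add_smul, pascal]
        congr 1
        ring
      · simp [hP0def]
    have hS2' : S2' = S2 - P0 := by
      have e : ∀ l ∈ range (i+1), ((-1:ℚ)^l * (i.choose l : ℚ)) •
            (fun x => d x)^[l] (f * (fun x => d x)^[i+N-l+1] g)
          = ((-1:ℚ)^l * (i.choose l : ℚ)) •
            (fun x => d x)^[l] (f * (fun x => d x)^[i+1+N-l] g) := by
        intro l hl
        simp only [mem_range] at hl
        have : i+N-l+1 = i+1+N-l := by omega
        rw [this]
      rw [hS2def, sum_congr rfl e,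
        Finset.sum_range_succ' (fun l => ((-1:ℚ)^l * (i.choose l : ℚ)) •
          (fun x => d x)^[l] (f * (fun x => d x)^[i+1+N-l] g)) i, hS2'def,
        Finset.sum_range_succ (fun l => (-((-1:ℚ)^l * (i.choose (l+1) : ℚ))) •
          (fun x => d x)^[l+1] (f * (fun x => d x)^[i+N-l] g)) i]
      simp only [Nat.choose_succ_self, Nat.cast_zero, mul_zero, neg_zero, zero_smul, add_zero,
        Nat.choose_zero_right, Nat.cast_one, mul_one, pow_zero, one_smul]
      have e2 : ∀ l ∈ range i, ((-1:ℚ)^(l+1) * (i.choose (l+1) : ℚ)) •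
            (fun x => d x)^[l+1] (f * (fun x => d x)^[i+1+N-(l+1)] g)
          = (-((-1:ℚ)^l * (i.choose (l+1) : ℚ))) •
            (fun x => d x)^[l+1] (f * (fun x => d x)^[i+N-l] g) := by
        intro l hl
        simp only [mem_range] at hl
        have e : i+1+N-(l+1) = i+N-l := by omega
        rw [e]
        congr 1
        ring
      rw [sum_congr rfl e2]
      simp only [Function.iterate_zero_apply, Nat.sub_zero, hP0def]
      abel
    have hpow : ((-1:ℚ)^(i+1)) • ((fun x => d x)^[i+1] f * (fun x => d x)^[N] g)
        = -(((-1:ℚ)^i) • ((fun x => d x)^[i+1] f * (fun x => d x)^[N] g)) := by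
      rw [pow_succ, mul_neg_one, neg_smul]
    rw [hL, hS2', hpow, ← ihdf]
    abel

lemma part1 (d : Derivation ℚ A A) (kc : ℤ → A) (bK : ℕ)
    (hneg : ∀ i : ℤ, i < 0 → kc i = 0) (f g : A) (N : ℕ) :
    compCoeff (fun x => d x) kc (bK:ℤ) (mopCoeff (fun x => d x) f g) (-1) (-1 - (N:ℤ))
      = mopCoeff (fun x => d x) (actC (fun x => d x) kc bK f) g (-1 - (N:ℤ)) := by
  set k : ℤ := -1 - (N:ℤ) with hk
  rw [compCoeff]
  set F : ℤ → A := fun i => ∑ l ∈ Finset.range ((i + -1 - k).toNat + 1),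
      gbinom i l • (kc i * (fun x => d x)^[l] (mopCoeff (fun x => d x) f g (k - i + l))) with hF
  have step0 : ∑ i ∈ Finset.Icc (k - -1) (bK:ℤ), F i = ∑ i ∈ Finset.Icc 0 (bK:ℤ), F i := by
    refine (Finset.sum_subset (Finset.Icc_subset_Icc (by omega) le_rfl) ?_).symm
    intro x hx hxn
    simp only [Finset.mem_Icc] at hx hxn
    have hx0 : x < 0 := by omega
    rw [hF]
    apply Finset.sum_eq_zero
    intro l _
    rw [hneg x hx0, zero_mul, smul_zero]
  rw [step0, sum_Icc_nat bK F]
  have inner_eq : ∀ i ∈ range (bK+1), F (i:ℤ)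
      = ((-1:ℚ)^N) • (kc (i:ℤ) * ((fun x => d x)^[i] f * (fun x => d x)^[N] g)) := by
    intro i hi
    rw [hF]
    dsimp only
    have harg : ((i:ℤ) + -1 - k).toNat = i + N := by omega
    rw [harg]
    have hterm : ∀ l ∈ range (i+N+1),
        gbinom (i:ℤ) l • (kc (i:ℤ) * (fun x => d x)^[l] (mopCoeff (fun x => d x) f g (k - (i:ℤ) + (l:ℤ))))
        = ((-1:ℚ)^(i+N)) • (kc (i:ℤ) *
            (((-1:ℚ)^l * (i.choose l : ℚ)) • (fun x => d x)^[l] (f * (fun x => d x)^[i+N-l] g))) := by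
      intro l hl
      simp only [mem_range] at hl
      have hm : mopCoeff (fun x => d x) f g (k - (i:ℤ) + (l:ℤ))
          = ((-1:ℚ)^(i+N-l)) • (f * (fun x => d x)^[i+N-l] g) := by
        rw [mopCoeff, if_pos (by omega)]
        have e1 : (-1 - (k - (i:ℤ) + (l:ℤ))) = ((i+N-l : ℕ) : ℤ) := by push_cast; omega
        rw [e1, zpow_natCast, Int.toNat_natCast]
      rw [hm, iter_smul, gbinom_natCast, mul_smul_comm, mul_smul_comm, smul_smul, smul_smul]
      congr 1
      rw [negpow_sub (i+N) l (by omega)]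
      ring
    rw [sum_congr rfl hterm, ← Finset.smul_sum, ← Finset.mul_sum]
    have hshrink : ∑ l ∈ range (i+N+1),
          ((-1:ℚ)^l * (i.choose l : ℚ)) • (fun x => d x)^[l] (f * (fun x => d x)^[i+N-l] g)
        = ∑ l ∈ range (i+1),
          ((-1:ℚ)^l * (i.choose l : ℚ)) • (fun x => d x)^[l] (f * (fun x => d x)^[i+N-l] g) := by
      refine (Finset.sum_subset (by apply Finset.range_subset_range.2; omega) ?_).symm
      intro x hx hxn
      simp only [mem_range] at hx hxn
      rw [Nat.choose_eq_zero_of_lt (by omega)]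
      simp
    rw [hshrink, keyL d g N i f, mul_smul_comm, smul_smul, negpow_cancel]
  rw [sum_congr rfl inner_eq, ← Finset.smul_sum]
  rw [mopCoeff, if_pos (by omega : k < 0)]
  have e2 : (-1 - k) = ((N:ℕ):ℤ) := by omega
  rw [e2, zpow_natCast, Int.toNat_natCast, actC, Finset.sum_mul]
  congr 1
  apply sum_congr rfl
  intro i _
  rw [mul_assoc]

lemma tri (b : ℕ) (φ : ℕ → ℕ → A) :
    ∑ i ∈ range (b+1), ∑ t ∈ range (b-i+1), φ i t
    = ∑ n ∈ range (b+1), ∑ i ∈ range (n+1), φ i (n-i) := by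
  rw [Finset.sum_sigma', Finset.sum_sigma']
  refine Finset.sum_nbij' (i := fun p => (⟨p.1 + p.2, p.1⟩ : Σ _ : ℕ, ℕ))
    (j := fun p => (⟨p.2, p.1 - p.2⟩ : Σ _ : ℕ, ℕ)) ?_ ?_ ?_ ?_ ?_
  · intro a ha; simp only [mem_sigma, mem_range] at *; omega
  · intro a ha; simp only [mem_sigma, mem_range] at *; omega
  · intro a ha
    obtain ⟨x, y⟩ := a
    simp only [mem_sigma, mem_range] at ha
    dsimp only
    rw [Nat.add_sub_cancel_left]
  · intro a ha
    obtain ⟨x, y⟩ := a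
    simp only [mem_sigma, mem_range] at ha
    dsimp only
    rw [Nat.add_sub_cancel' (show y ≤ x by omega)]
  · intro a ha
    obtain ⟨x, y⟩ := a
    simp only [mem_sigma, mem_range] at ha
    dsimp only
    congr 1
    omega

lemma part2a (d : Derivation ℚ A A) (kc : ℤ → A) (bK : ℕ)
    (hneg : ∀ i : ℤ, i < 0 → kc i = 0) (hb : ∀ i : ℤ, (bK : ℤ) < i → kc i = 0)
    (f g : A) (N : ℕ) :
    compCoeff (fun x => d x) (mopCoeff (fun x => d x) f g) (-1) kc (bK:ℤ) (-1 - (N:ℤ))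
      = ∑ n ∈ range (bK+1), ((-1:ℚ)^(n+N)) •
          (f * (fun x => d x)^[n+N] (g * kc (n:ℤ))) := by
  set k : ℤ := -1 - (N:ℤ) with hk
  rw [compCoeff]
  set F : ℤ → A := fun i => ∑ l ∈ Finset.range ((i + (bK:ℤ) - k).toNat + 1),
      gbinom i l • (mopCoeff (fun x => d x) f g i * (fun x => d x)^[l] (kc (k - i + l))) with hF
  set H : ℕ → ℤ → A := fun j n =>
      (((-1:ℚ))^(j + (n + (N:ℤ) - (j:ℤ)).toNat) * (((n + (N:ℤ)).toNat).choose j : ℚ)) •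
        ((f * (fun x => d x)^[j] g) * (fun x => d x)^[(n + (N:ℤ) - (j:ℤ)).toNat] (kc n)) with hH
  have hIcc : k - (bK:ℤ) = -1 - ((N+bK : ℕ):ℤ) := by push_cast; omega
  rw [hIcc, sum_Icc_neg (N+bK) F]
  have step1 : ∀ j ∈ range (N+bK+1), F (-1 - (j:ℤ))
      = ∑ n ∈ Finset.Icc (-(N:ℤ)) (bK:ℤ), H j n := by
    intro j hj
    simp only [mem_range] at hj
    rw [hF]
    dsimp only
    have harg : ((-1 - (j:ℤ)) + (bK:ℤ) - k).toNat = bK + N - j := by omega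
    rw [harg]
    have hmid : ∑ l ∈ Finset.range (bK + N - j + 1),
        gbinom (-1 - (j:ℤ)) l • (mopCoeff (fun x => d x) f g (-1 - (j:ℤ)) *
          (fun x => d x)^[l] (kc (k - (-1 - (j:ℤ)) + (l:ℤ))))
        = ∑ n ∈ Finset.Icc ((j:ℤ) - (N:ℤ)) (bK:ℤ), H j n := by
      refine Finset.sum_nbij' (i := fun l : ℕ => (j:ℤ) - (N:ℤ) + l)
        (j := fun n : ℤ => (n + (N:ℤ) - (j:ℤ)).toNat) ?_ ?_ ?_ ?_ ?_
      · intro a ha; simp only [mem_range] at ha; simp only [Finset.mem_Icc]; omega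
      · intro a ha; simp only [Finset.mem_Icc] at ha; simp only [mem_range]; omega
      · intro a ha; simp only [mem_range] at ha; omega
      · intro a ha; simp only [Finset.mem_Icc] at ha; omega
      · intro l hl
        simp only [mem_range] at hl
        rw [hH]
        dsimp only
        have e1 : ((j:ℤ) - (N:ℤ) + (l:ℤ) + (N:ℤ) - (j:ℤ)).toNat = l := by omega
        have e2 : ((j:ℤ) - (N:ℤ) + (l:ℤ) + (N:ℤ)).toNat = j + l := by omega
        have e3 : (k - (-1 - (j:ℤ)) + (l:ℤ)) = (j:ℤ) - (N:ℤ) + (l:ℤ) := by omega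
        rw [e1, e2, e3]
        have hm : mopCoeff (fun x => d x) f g (-1 - (j:ℤ))
            = ((-1:ℚ)^j) • (f * (fun x => d x)^[j] g) := by
          rw [mopCoeff, if_pos (by omega)]
          have e4 : (-1 - (-1 - (j:ℤ))) = ((j:ℕ):ℤ) := by omega
          rw [e4, zpow_natCast, Int.toNat_natCast]
        rw [hm, gbinom_neg j l, smul_mul_assoc, smul_smul, Nat.choose_symm_add]
        congr 1
        ring
    rw [hmid]
    refine Finset.sum_subset (Finset.Icc_subset_Icc (by omega) le_rfl) ?_
    intro n hn hnn
    simp only [Finset.mem_Icc] at hn hnn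
    rw [hH]
    dsimp only
    rcases lt_or_ge n 0 with hn0 | hn0
    · rw [hneg n hn0, iter_zero, mul_zero, smul_zero]
    · have : (n + (N:ℤ)).toNat < j := by omega
      rw [Nat.choose_eq_zero_of_lt this]
      simp
  rw [sum_congr rfl step1, Finset.sum_comm]
  have step3 : ∑ n ∈ Finset.Icc (-(N:ℤ)) (bK:ℤ), ∑ j ∈ range (N+bK+1), H j n
      = ∑ n ∈ Finset.Icc (0:ℤ) (bK:ℤ), ∑ j ∈ range (N+bK+1), H j n := by
    refine (Finset.sum_subset (Finset.Icc_subset_Icc (by omega) le_rfl) ?_).symm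
    intro n hn hnn
    simp only [Finset.mem_Icc] at hn hnn
    apply Finset.sum_eq_zero
    intro j _
    rw [hH]
    dsimp only
    rw [hneg n (by omega), iter_zero, mul_zero, smul_zero]
  rw [step3, sum_Icc_nat bK]
  apply sum_congr rfl
  intro n hn
  simp only [mem_range] at hn
  have hshrink : ∑ j ∈ range (N+bK+1), H j (n:ℤ) = ∑ j ∈ range (n+N+1), H j (n:ℤ) := by
    refine (Finset.sum_subset (by apply Finset.range_subset_range.2; omega) ?_).symm
    intro j hj hjn
    simp only [mem_range] at hj hjn
    rw [hH]
    dsimp only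
    have e5 : ((n:ℤ) + (N:ℤ)).toNat = n + N := by omega
    rw [e5, Nat.choose_eq_zero_of_lt (by omega)]
    simp
  rw [hshrink, iter_mul d (n+N) g (kc (n:ℤ)), Finset.mul_sum, Finset.smul_sum]
  apply sum_congr rfl
  intro j hj
  simp only [mem_range] at hj
  rw [hH]
  dsimp only
  have e5 : ((n:ℤ) + (N:ℤ)).toNat = n + N := by omega
  have e6 : ((n:ℤ) + (N:ℤ) - (j:ℤ)).toNat = n + N - j := by omega
  have e7 : j + (n + N - j) = n + N := by omega
  rw [e5, e6, e7, mul_smul_comm, smul_smul, mul_assoc]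

lemma part2b (d : Derivation ℚ A A) (kc : ℤ → A) (bK : ℕ)
    (f g : A) (N : ℕ) :
    mopCoeff (fun x => d x) f (actC (fun x => d x) (adjCoeff (fun x => d x) kc (bK:ℤ)) bK g) (-1 - (N:ℤ))
      = ∑ n ∈ range (bK+1), ((-1:ℚ)^(n+N)) •
          (f * (fun x => d x)^[n+N] (g * kc (n:ℤ))) := by
  have hadj : actC (fun x => d x) (adjCoeff (fun x => d x) kc (bK:ℤ)) bK g
      = ∑ n ∈ range (bK+1), ((-1:ℚ)^n) • (fun x => d x)^[n] (g * kc (n:ℤ)) := by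
    rw [actC]
    have hstep : ∀ i ∈ range (bK+1),
        adjCoeff (fun x => d x) kc (bK:ℤ) (i:ℤ) * (fun x => d x)^[i] g
        = ∑ t ∈ range (bK - i + 1), ((-1:ℚ)^(i+t) * ((i+t).choose t : ℚ)) •
            ((fun x => d x)^[t] (kc ((i:ℤ) + (t:ℤ))) * (fun x => d x)^[i] g) := by
      intro i hi
      simp only [mem_range] at hi
      rw [adjCoeff, sum_Icc_shift i bK (by omega), Finset.sum_mul]
      apply sum_congr rfl
      intro t _
      have e1 : ((i:ℤ) + (t:ℤ) - (i:ℤ)) = ((t:ℕ):ℤ) := by omega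
      have e2 : ((i:ℤ) + (t:ℤ)) = (((i+t:ℕ)):ℤ) := by push_cast; omega
      rw [e1, Int.toNat_natCast, e2, gbinom_natCast, zpow_natCast, smul_mul_assoc]
    rw [sum_congr rfl hstep, tri bK]
    apply sum_congr rfl
    intro n hn
    simp only [mem_range] at hn
    rw [iter_mul d n g (kc (n:ℤ)), Finset.smul_sum]
    apply sum_congr rfl
    intro i hi
    simp only [mem_range] at hi
    have e3 : i + (n - i) = n := by omega
    have e4 : ((i:ℤ) + ((n-i : ℕ):ℤ)) = ((n:ℕ):ℤ) := by push_cast; omega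
    rw [e3, e4, Nat.choose_symm (by omega : i ≤ n), smul_smul]
    congr 1
    rw [mul_comm ((fun x => d x)^[i] g) _]
  rw [hadj, mopCoeff, if_pos (by omega : -1 - (N:ℤ) < 0)]
  have e5 : (-1 - (-1 - (N:ℤ))) = ((N:ℕ):ℤ) := by omega
  rw [e5, zpow_natCast, Int.toNat_natCast, iter_eq, map_sum]
  rw [Finset.mul_sum, Finset.smul_sum]
  apply sum_congr rfl
  intro n hn
  rw [map_smul, ← iter_eq]
  have e6 : (fun x => d x)^[N] ((fun x => d x)^[n] (g * kc (n:ℤ)))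
      = (fun x => d x)^[n+N] (g * kc (n:ℤ)) := by
    rw [add_comm n N, Function.iterate_add_apply]
  rw [e6, mul_smul_comm, smul_smul]
  congr 1
  ring

theorem stmt8 (d : Derivation ℚ A A) (kc : ℤ → A) (bK : ℕ)
    (hneg : ∀ i : ℤ, i < 0 → kc i = 0) (hb : ∀ i : ℤ, (bK : ℤ) < i → kc i = 0)
    (f g : A) :
    ∀ k : ℤ, k < 0 →
      compCoeff (fun x => d x) kc bK (mopCoeff (fun x => d x) f g) (-1) k
          - compCoeff (fun x => d x) (mopCoeff (fun x => d x) f g) (-1) kc bK k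
        = mopCoeff (fun x => d x) (actC (fun x => d x) kc bK f) g k
            - mopCoeff (fun x => d x) f
                (actC (fun x => d x) (adjCoeff (fun x => d x) kc bK) bK g) k := by
  intro k hkneg
  obtain ⟨N, hkN⟩ : ∃ N : ℕ, k = -1 - (N:ℤ) := ⟨(-1-k).toNat, by omega⟩
  subst hkN
  rw [part1 d kc bK hneg f g N, part2a d kc bK hneg hb f g N, part2b d kc bK f g N]

end
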